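/- The map (Σ, U) ↦ trace(UᵀΣ⁻¹U) is jointly convex on the set of pairs (Σ, U) with Σ ∈ Matrix (Fin n) (Fin n) ℝ symmetric positive definite and U ∈ Matrix (Fin n) (Fin m) ℝ. -/

import Mathlib

open Matrix

lemma psd_smul_aux {ι : Type*} [Fintype ι] {A : Matrix ι ι ℝ} (hA : A.PosSemidef)
    {c : ℝ} (hc : 0 ≤ c) : (c • A).PosSemidef := by
  refine ⟨?_, fun x => ?_⟩
  · unfold Matrix.IsHermitian
    rw [conjTranspose_smul, hA.1.eq]
    simp
  · have h := mul_nonneg hc (hA.2 x)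
    simp only [Finsupp.mul_sum] at h
    refine h.trans_eq (Finsupp.sum_congr fun i _ => Finsupp.sum_congr fun j _ => ?_)
    simp only [Matrix.smul_apply, smul_eq_mul]
    ring

lemma psd_trace_nonneg {ι : Type*} [Fintype ι] [DecidableEq ι] {A : Matrix ι ι ℝ}
    (hA : A.PosSemidef) : 0 ≤ A.trace := by
  rw [Matrix.trace]
  refine Finset.sum_nonneg fun i _ => ?_
  have := hA.dotProduct_mulVec_nonneg (Pi.single i 1)
  simpa [mulVec_single, dotProduct_single] using this

theorem stmt_14 (n m : ℕ) (hn : 0 < n) (hm : 0 < m)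
    (Sig₁ Sig₂ : Matrix (Fin n) (Fin n) ℝ)
    (h₁ : Sig₁.PosDef) (h₂ : Sig₂.PosDef) (hs₁ : Sig₁ᵀ = Sig₁) (hs₂ : Sig₂ᵀ = Sig₂)
    (U₁ U₂ : Matrix (Fin n) (Fin m) ℝ) (t : ℝ) (ht0 : 0 ≤ t) (ht1 : t ≤ 1) :
    ((t • U₁ + (1 - t) • U₂)ᵀ * (t • Sig₁ + (1 - t) • Sig₂)⁻¹ * (t • U₁ + (1 - t) • U₂)).trace
      ≤ t * (U₁ᵀ * Sig₁⁻¹ * U₁).trace + (1 - t) * (U₂ᵀ * Sig₂⁻¹ * U₂).trace := by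
  have ht0' : 0 ≤ 1 - t := by linarith
  set Sc := t • Sig₁ + (1 - t) • Sig₂ with hSc
  set V := t • U₁ + (1 - t) • U₂ with hV
  -- positive definiteness of the combination
  have hSc' : Sc.PosDef := by
    refine posDef_iff_dotProduct_mulVec.mpr ⟨?_, fun x hx => ?_⟩
    · unfold Matrix.IsHermitian
      rw [conjTranspose_add, conjTranspose_smul, conjTranspose_smul, h₁.1.eq, h₂.1.eq]
      simp [hSc]
    · have e : star x ⬝ᵥ Sc *ᵥ x
          = t * (star x ⬝ᵥ Sig₁ *ᵥ x) + (1 - t) * (star x ⬝ᵥ Sig₂ *ᵥ x) := by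
        rw [hSc, add_mulVec, dotProduct_add, smul_mulVec, smul_mulVec,
          dotProduct_smul, dotProduct_smul]
        rfl
      rw [e]
      rcases lt_or_eq_of_le ht0 with ht | ht
      · have := h₁.dotProduct_mulVec_pos hx
        have := h₂.posSemidef.dotProduct_mulVec_nonneg x
        nlinarith
      · rw [← ht]
        simpa using h₂.dotProduct_mulVec_pos hx
  haveI : Invertible Sc := hSc'.isUnit.invertible
  haveI : Invertible Sig₁ := h₁.isUnit.invertible
  haveI : Invertible Sig₂ := h₂.isUnit.invertible
  -- block matrices
  have key : ∀ (S : Matrix (Fin n) (Fin n) ℝ) (U : Matrix (Fin n) (Fin m) ℝ)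
      (hS : S.PosDef) [Invertible S],
      (fromBlocks S U Uᴴ (Uᴴ * S⁻¹ * U)).PosSemidef := by
    intro S U hS _
    rw [PosDef.fromBlocks₁₁ U _ hS]
    simpa using (PosSemidef.zero (n := Fin m) (R := ℝ))
  have hM₁ := key Sig₁ U₁ h₁
  have hM₂ := key Sig₂ U₂ h₂
  have hsum : (t • fromBlocks Sig₁ U₁ U₁ᴴ (U₁ᴴ * Sig₁⁻¹ * U₁)
      + (1 - t) • fromBlocks Sig₂ U₂ U₂ᴴ (U₂ᴴ * Sig₂⁻¹ * U₂)).PosSemidef :=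
    (psd_smul_aux hM₁ ht0).add (psd_smul_aux hM₂ ht0')
  have hblock : t • fromBlocks Sig₁ U₁ U₁ᴴ (U₁ᴴ * Sig₁⁻¹ * U₁)
      + (1 - t) • fromBlocks Sig₂ U₂ U₂ᴴ (U₂ᴴ * Sig₂⁻¹ * U₂)
      = fromBlocks Sc V Vᴴ
        (t • (U₁ᴴ * Sig₁⁻¹ * U₁) + (1 - t) • (U₂ᴴ * Sig₂⁻¹ * U₂)) := by
    rw [hSc, hV, fromBlocks_smul, fromBlocks_smul, fromBlocks_add]
    congr 1
  rw [hblock] at hsum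
  rw [PosDef.fromBlocks₁₁ V _ hSc'] at hsum
  have htr := psd_trace_nonneg hsum
  rw [trace_sub, trace_add, trace_smul, trace_smul] at htr
  have hVt : Vᴴ = Vᵀ := conjTranspose_eq_transpose_of_trivial V
  have h1t : U₁ᴴ = U₁ᵀ := conjTranspose_eq_transpose_of_trivial U₁
  have h2t : U₂ᴴ = U₂ᵀ := conjTranspose_eq_transpose_of_trivial U₂
  rw [hVt, h1t, h2t] at htr
  simp only [smul_eq_mul] at htr
  linarith
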